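/- Let t0 ≤ t1 < t2 ≤ T. If (x̃,ũ) and (x̂,û) are feasible processes for (FP3) such that x̃(t) = −1 for all t ∈ [t1,t2], and x̂(t) = −1 + a(t − t1) for t ∈ [t1, t̂] and x̂(t) = −1 − a(t − t2) for t ∈ (t̂, t2], where t̂ := (t1+t2)/2, then J(x̂,û)|_{[t1,t2]} − J(x̃,ũ)|_{[t1,t2]} = −(1/λ)(a/λ − 1)·Δ(t1,t2); consequently J(x̂,û)|_{[t1,t2]} < J(x̃,ũ)|_{[t1,t2]}. -/

import Mathlib

open MeasureTheory Set intervalIntegral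

noncomputable section

/-- A feasible process for problem (FP3): `x` is the (absolutely continuous) state
trajectory, represented as the indefinite integral of its a.e. derivative `-a*u`,
`u` is a measurable control with values in `[-1,1]` a.e., the initial condition is
`x t0 = x0`, and the bilateral state constraint `-1 ≤ x t ≤ 1` holds on `[t0,T]`. -/
def FP3Feasible (a t0 T x0 : ℝ) (x u : ℝ → ℝ) : Prop :=
  AEStronglyMeasurable u (volume.restrict (Icc t0 T)) ∧
  (∀ᵐ t ∂(volume.restrict (Icc t0 T)), u t ∈ Icc (-1 : ℝ) 1) ∧
  (∀ t ∈ Icc t0 T, x t = x0 + ∫ s in t0..t, -(a * u s)) ∧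
  (∀ t ∈ Icc t0 T, x t ∈ Icc (-1 : ℝ) 1)

/-- The cost functional of (FP3) on the interval `[t1,t2]`. -/
def FP3Cost (lam t1 t2 : ℝ) (x u : ℝ → ℝ) : ℝ :=
  ∫ t in t1..t2, -(Real.exp (-(lam * t)) * (x t + u t))

/-- `(x,u)` is a `W^{1,1}` local minimizer of (FP3). -/
def FP3LocalMin (a lam t0 T x0 : ℝ) (x u : ℝ → ℝ) : Prop :=
  FP3Feasible a t0 T x0 x u ∧
  ∃ δ > (0 : ℝ), ∀ y v, FP3Feasible a t0 T x0 y v →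
    (∫ t in t0..T, |(-(a * v t)) - (-(a * u t))|) ≤ δ →
    FP3Cost lam t0 T x u ≤ FP3Cost lam t0 T y v

/-- `(x,u)` is a `W^{1,1}` global minimizer of (FP3). -/
def FP3GlobalMin (a lam t0 T x0 : ℝ) (x u : ℝ → ℝ) : Prop :=
  FP3Feasible a t0 T x0 x u ∧
  ∀ y v, FP3Feasible a t0 T x0 y v → FP3Cost lam t0 T x u ≤ FP3Cost lam t0 T y v

/-- The function `Δ(t1,t2) = e^{-λ t1} - 2 e^{-λ (t1+t2)/2} + e^{-λ t2}`. -/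
def FP3Delta (lam t1 t2 : ℝ) : ℝ :=
  Real.exp (-(lam * t1)) - 2 * Real.exp (-(lam * (t1 + t2) / 2)) + Real.exp (-(lam * t2))

/-- The characteristic constant `ρ = (1/λ) ln (a/(a-λ))` of (FP3). -/
def FP3rho (a lam : ℝ) : ℝ := (1 / lam) * Real.log (a / (a - lam))

lemma exp_hasDeriv (lam t : ℝ) : HasDerivAt (fun s => Real.exp (-(lam*s))) (Real.exp (-(lam*t)) * (-lam)) t := by
  have h1 : HasDerivAt (fun s : ℝ => -(lam*s)) (-lam) t := by
    simpa using ((hasDerivAt_id t).const_mul (-lam))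
  exact h1.exp

lemma int_exp (lam : ℝ) (hlam : lam ≠ 0) (p q : ℝ) :
    ∫ t in p..q, Real.exp (-(lam*t)) = (Real.exp (-(lam*p)) - Real.exp (-(lam*q)))/lam := by
  have h : ∀ t ∈ uIcc p q, HasDerivAt (fun s => -Real.exp (-(lam*s))/lam) (Real.exp (-(lam*t))) t := by
    intro t _
    have := ((exp_hasDeriv lam t).neg).div_const lam
    apply this.congr_deriv
    field_simp
  rw [integral_eq_sub_of_hasDerivAt h (Continuous.intervalIntegrable (by continuity) p q)]
  ring

lemma int_exp_mul (lam : ℝ) (hlam : lam ≠ 0) (c p q : ℝ) :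
    ∫ t in p..q, Real.exp (-(lam*t)) * (t - c)
      = (-(Real.exp (-(lam*q)) * ((q-c)/lam + 1/lam^2))) - (-(Real.exp (-(lam*p)) * ((p-c)/lam + 1/lam^2))) := by
  have h : ∀ t ∈ uIcc p q, HasDerivAt (fun s => -(Real.exp (-(lam*s)) * ((s-c)/lam + 1/lam^2))) (Real.exp (-(lam*t)) * (t - c)) t := by
    intro t _
    have h2 : HasDerivAt (fun s : ℝ => (s-c)/lam + 1/lam^2) (1/lam) t := by
      exact (((hasDerivAt_id t).sub_const c).div_const lam).add_const (1/lam^2)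
    have := ((exp_hasDeriv lam t).mul h2).neg
    apply this.congr_deriv
    field_simp
    ring
  rw [integral_eq_sub_of_hasDerivAt h (Continuous.intervalIntegrable (by continuity) p q)]

lemma int_lam_exp (lam p q : ℝ) :
    ∫ s in p..q, lam * Real.exp (-(lam*s)) = Real.exp (-(lam*p)) - Real.exp (-(lam*q)) := by
  have h : ∀ t ∈ uIcc p q, HasDerivAt (fun s => -Real.exp (-(lam*s))) (lam * Real.exp (-(lam*t))) t := by
    intro t _
    have := (exp_hasDeriv lam t).neg
    apply this.congr_deriv; ring
  rw [integral_eq_sub_of_hasDerivAt h (Continuous.intervalIntegrable (by continuity) p q)]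
  ring

lemma fp3_parts (lam c d : ℝ) (hcd : c ≤ d) (g : ℝ → ℝ)
    (hg : IntegrableOn g (Icc c d)) :
    ∫ t in c..d, Real.exp (-(lam*t)) * g t
      = Real.exp (-(lam*d)) * (∫ t in c..d, g t)
        + lam * ∫ s in c..d, Real.exp (-(lam*s)) * (∫ t in c..s, g t) := by
  set μ := volume.restrict (Ioc c d) with hμ
  have hgIoc : Integrable g μ := hg.mono_set Ioc_subset_Icc_self
  have hcont : Integrable (fun s => lam * Real.exp (-(lam*s))) μ := by
    apply ContinuousOn.integrableOn_compact isCompact_Icc (by fun_prop) |>.mono_set Ioc_subset_Icc_self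
  set F : ℝ × ℝ → ℝ :=
    ({p : ℝ × ℝ | p.1 < p.2}).indicator (fun p => g p.1 * (lam * Real.exp (-(lam*p.2)))) with hF
  have hS : MeasurableSet {p : ℝ × ℝ | p.1 < p.2} := measurableSet_lt measurable_fst measurable_snd
  have hFint : Integrable F (μ.prod μ) :=
    (Integrable.mul_prod hgIoc hcont).indicator hS
  -- inner evaluation (first order)
  have hinner : ∀ t ∈ Ioc c d,
      (∫ s, F (t, s) ∂μ) = g t * (Real.exp (-(lam*t)) - Real.exp (-(lam*d))) := by
    intro t ht
    have h1 : (fun s => F (t, s)) = (Ioi t).indicator (fun s => g t * (lam * Real.exp (-(lam*s)))) := by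
      funext s
      by_cases h : t < s <;> simp [hF, Set.indicator, h, Set.mem_Ioi]
    rw [hμ, h1, setIntegral_indicator measurableSet_Ioi]
    have h2 : Ioc c d ∩ Ioi t = Ioc t d := by
      ext x; simp only [mem_inter_iff, mem_Ioc, mem_Ioi]
      constructor
      · rintro ⟨⟨_, h2⟩, h3⟩; exact ⟨h3, h2⟩
      · rintro ⟨h1', h2⟩; exact ⟨⟨lt_trans ht.1 h1', h2⟩, h1'⟩
    rw [h2, ← intervalIntegral.integral_of_le ht.2, intervalIntegral.integral_const_mul,
      int_lam_exp]
  -- inner evaluation (swapped order)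
  have houter : ∀ s ∈ Ioc c d,
      (∫ t, F (t, s) ∂μ) = (lam * Real.exp (-(lam*s))) * (∫ t in c..s, g t) := by
    intro s hs
    have h1 : (fun t => F (t, s)) = (Iio s).indicator (fun t => g t * (lam * Real.exp (-(lam*s)))) := by
      funext t
      by_cases h : t < s <;> simp [hF, Set.indicator, h, Set.mem_Iio]
    rw [hμ, h1, setIntegral_indicator measurableSet_Iio]
    have h2 : Ioc c d ∩ Iio s = Ioo c s := by
      ext x; simp only [mem_inter_iff, mem_Ioc, mem_Ioo, mem_Iio]
      constructor
      · rintro ⟨⟨h1', _⟩, h3⟩; exact ⟨h1', h3⟩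
      · rintro ⟨h1', h2'⟩; exact ⟨⟨h1', le_trans h2'.le hs.2⟩, h2'⟩
    rw [h2, ← MeasureTheory.integral_Ioc_eq_integral_Ioo,
      ← intervalIntegral.integral_of_le hs.1.le]
    rw [intervalIntegral.integral_mul_const]; ring
  -- now the main computation
  have swap : (∫ t, ∫ s, F (t, s) ∂μ ∂μ) = ∫ s, ∫ t, F (t, s) ∂μ ∂μ :=
    integral_integral_swap hFint
  have lhs1 : ∫ t in c..d, Real.exp (-(lam*t)) * g t
      = Real.exp (-(lam*d)) * (∫ t in c..d, g t) + ∫ t, ∫ s, F (t, s) ∂μ ∂μ := by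
    rw [intervalIntegral.integral_of_le hcd, intervalIntegral.integral_of_le hcd, ← hμ]
    rw [← MeasureTheory.integral_const_mul]
    rw [← integral_add (hgIoc.const_mul _)]
    · apply setIntegral_congr_fun measurableSet_Ioc
      intro t ht
      dsimp only
      rw [hinner t ht]; ring
    · exact hFint.integral_prod_left
  rw [lhs1, swap]
  congr 1
  rw [intervalIntegral.integral_of_le hcd, ← hμ, ← MeasureTheory.integral_const_mul]
  apply setIntegral_congr_fun measurableSet_Ioc
  intro s hs
  dsimp only
  rw [houter s hs]; ring

noncomputable section

lemma feas_integrableOn {a t0 T x0 : ℝ} {x u : ℝ → ℝ}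
    (hf : FP3Feasible a t0 T x0 x u) : IntegrableOn u (Icc t0 T) := by
  refine ⟨hf.1, HasFiniteIntegral.restrict_of_bounded (C := 1) ?_ ?_⟩
  · simp [Real.volume_Icc]
  · filter_upwards [hf.2.1] with t ht
    rw [Real.norm_eq_abs, abs_le]; exact ⟨ht.1, ht.2⟩

lemma cost_split (lam t1 t2 : ℝ) (h12 : t1 ≤ t2) (x u φ : ℝ → ℝ)
    (hφ : Continuous φ)
    (hxφ : ∀ t ∈ Ioc t1 t2, x t = φ t)
    (hu : IntegrableOn u (Icc t1 t2)) :
    FP3Cost lam t1 t2 x u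
      = -(∫ t in t1..t2, Real.exp (-(lam*t)) * φ t)
        - (Real.exp (-(lam*t2)) * (∫ t in t1..t2, u t)
           + lam * ∫ s in t1..t2, Real.exp (-(lam*s)) * (∫ t in t1..s, u t)) := by
  have hfu : IntegrableOn (fun t => Real.exp (-(lam*t)) * u t) (Icc t1 t2) :=
    IntegrableOn.continuousOn_mul (Continuous.continuousOn (by continuity)) hu isCompact_Icc
  have hfφ : IntegrableOn (fun t => Real.exp (-(lam*t)) * φ t) (Icc t1 t2) :=
    (Continuous.integrableOn_Icc (by continuity))
  rw [FP3Cost, intervalIntegral.integral_of_le h12]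
  have hcongr : ∫ t in Ioc t1 t2, -(Real.exp (-(lam*t)) * (x t + u t))
      = ∫ t in Ioc t1 t2, (-(Real.exp (-(lam*t)) * φ t) + -(Real.exp (-(lam*t)) * u t)) := by
    apply setIntegral_congr_fun measurableSet_Ioc
    intro t ht; dsimp only; rw [hxφ t ht]; ring
  have h1 : Integrable (fun t => -(Real.exp (-(lam*t)) * φ t)) (volume.restrict (Ioc t1 t2)) :=
    (hfφ.mono_set Ioc_subset_Icc_self).neg
  have h2 : Integrable (fun t => -(Real.exp (-(lam*t)) * u t)) (volume.restrict (Ioc t1 t2)) :=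
    (hfu.mono_set Ioc_subset_Icc_self).neg
  rw [hcongr, integral_add h1 h2, MeasureTheory.integral_neg, MeasureTheory.integral_neg,
    ← intervalIntegral.integral_of_le h12, ← intervalIntegral.integral_of_le h12]
  rw [show ∫ t in t1..t2, Real.exp (-(lam*t)) * u t
      = Real.exp (-(lam*t2)) * (∫ t in t1..t2, u t)
        + lam * ∫ s in t1..t2, Real.exp (-(lam*s)) * (∫ t in t1..s, u t) from
    fp3_parts lam t1 t2 h12 u hu]
  ring

lemma feas_primitive {a t0 T x0 t1 t2 : ℝ} {x u : ℝ → ℝ}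
    (ha : a ≠ 0) (h01 : t0 ≤ t1) (h12 : t1 ≤ t2) (h2T : t2 ≤ T)
    (hf : FP3Feasible a t0 T x0 x u) :
    ∀ s ∈ Icc t1 t2, ∫ t in t1..s, u t = (x t1 - x s) / a := by
  intro s hs
  have hu : IntegrableOn u (Icc t0 T) := feas_integrableOn hf
  have h1T : t1 ≤ T := le_trans h12 h2T
  have hsT : s ∈ Icc t0 T := ⟨le_trans h01 hs.1, le_trans hs.2 h2T⟩
  have hx1 : x t1 = x0 + ∫ t in t0..t1, -(a * u t) := hf.2.2.1 t1 ⟨h01, h1T⟩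
  have hxs : x s = x0 + ∫ t in t0..s, -(a * u t) := hf.2.2.1 s hsT
  have hii : ∀ p q : ℝ, t0 ≤ p → p ≤ q → q ≤ T → IntervalIntegrable u volume p q := by
    intro p q hp hpq hq
    exact (hu.mono_set (by rw [uIcc_of_le hpq]; exact Icc_subset_Icc hp hq)).intervalIntegrable
  have hi1 : IntervalIntegrable u volume t0 t1 := hii t0 t1 le_rfl h01 h1T
  have his : IntervalIntegrable u volume t0 s := hii t0 s le_rfl hsT.1 hsT.2
  have key : (∫ t in t0..s, u t) - (∫ t in t0..t1, u t) = ∫ t in t1..s, u t :=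
    intervalIntegral.integral_interval_sub_left his hi1
  have e1 : ∀ p q : ℝ, (∫ t in p..q, -(a * u t)) = -(a * ∫ t in p..q, u t) := by
    intro p q
    rw [intervalIntegral.integral_neg, intervalIntegral.integral_const_mul]
  rw [e1] at hx1 hxs
  field_simp
  rw [← key]
  linarith [hx1, hxs]

set_option maxHeartbeats 1000000 in
/-- Lemma 3.3: comparison of the restricted costs of a process
staying at the lower boundary `-1` and of the "tent" process on `[t1,t2]`. -/
theorem fp3_lemma_technical1b
    (a lam t0 T x0 : ℝ) (hal : lam < a) (hlam : 0 < lam)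
    (ht0 : 0 ≤ t0) (htT : t0 < T) (hx0 : x0 ∈ Icc (-1 : ℝ) 1)
    (t1 t2 : ℝ) (h01 : t0 ≤ t1) (h12 : t1 < t2) (h2T : t2 ≤ T)
    (xt ut xh uh : ℝ → ℝ)
    (hft : FP3Feasible a t0 T x0 xt ut) (hfh : FP3Feasible a t0 T x0 xh uh)
    (hxt : ∀ t ∈ Icc t1 t2, xt t = -1)
    (hxh1 : ∀ t ∈ Icc t1 ((t1 + t2) / 2), xh t = -1 + a * (t - t1))
    (hxh2 : ∀ t ∈ Ioc ((t1 + t2) / 2) t2, xh t = -1 - a * (t - t2)) :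
    FP3Cost lam t1 t2 xh uh - FP3Cost lam t1 t2 xt ut
      = -((1 / lam) * (a / lam - 1) * FP3Delta lam t1 t2) ∧
    FP3Cost lam t1 t2 xh uh < FP3Cost lam t1 t2 xt ut := by
  have ha : (0:ℝ) < a := lt_trans hlam hal
  have hlam' : lam ≠ 0 := ne_of_gt hlam
  set m : ℝ := (t1 + t2) / 2 with hm
  have hm1 : t1 ≤ m := by rw [hm]; linarith
  have hm2 : m ≤ t2 := by rw [hm]; linarith
  have hmlt : m < t2 := by rw [hm]; linarith
  have h12' : t1 ≤ t2 := h12.le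
  have hut12 : IntegrableOn ut (Icc t1 t2) :=
    (feas_integrableOn hft).mono_set (Icc_subset_Icc h01 h2T)
  have huh12 : IntegrableOn uh (Icc t1 t2) :=
    (feas_integrableOn hfh).mono_set (Icc_subset_Icc h01 h2T)
  -- primitive of ut is zero
  have hGt : ∀ s ∈ Icc t1 t2, ∫ t in t1..s, ut t = 0 := by
    intro s hs
    rw [feas_primitive (ne_of_gt ha) h01 h12' h2T hft s hs,
      hxt t1 ⟨le_rfl, h12'⟩, hxt s hs]
    ring
  -- primitive of uh
  have hGh : ∀ s ∈ Icc t1 t2, ∫ t in t1..s, uh t = |s - m| - (m - t1) := by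
    intro s hs
    rw [feas_primitive (ne_of_gt ha) h01 h12' h2T hfh s hs, hxh1 t1 ⟨le_rfl, hm1⟩]
    rcases le_or_gt s m with h | h
    · rw [hxh1 s ⟨hs.1, h⟩, abs_of_nonpos (by linarith)]
      field_simp; ring
    · rw [hxh2 s ⟨h, hs.2⟩, abs_of_pos (by linarith)]
      rw [hm]; field_simp; ring
  -- cost of the boundary process
  have hCt : FP3Cost lam t1 t2 xt ut
      = (Real.exp (-(lam*t1)) - Real.exp (-(lam*t2)))/lam := by
    rw [cost_split lam t1 t2 h12' xt ut (fun _ => -1) continuous_const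
      (fun t ht => hxt t ⟨ht.1.le, ht.2⟩) hut12]
    rw [hGt t2 ⟨h12', le_rfl⟩]
    have e1 : ∫ s in t1..t2, Real.exp (-(lam*s)) * (∫ t in t1..s, ut t)
        = ∫ s in t1..t2, (0:ℝ) := by
      apply intervalIntegral.integral_congr
      intro s hs
      rw [uIcc_of_le h12'] at hs
      dsimp only; rw [hGt s hs]; ring
    have e2 : ∫ t in t1..t2, Real.exp (-(lam*t)) * (-1:ℝ)
        = ∫ t in t1..t2, -Real.exp (-(lam*t)) := by
      apply intervalIntegral.integral_congr; intro t _; dsimp only; ring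
    rw [e1, e2, intervalIntegral.integral_neg, int_exp lam hlam']
    simp
  -- cost of the tent process
  set φh : ℝ → ℝ := fun t => -1 + a*(m - t1) - a*|t - m| with hφh
  have hφhc : Continuous φh := by
    exact Continuous.sub continuous_const
      (continuous_const.mul ((continuous_id.sub continuous_const).abs))
  have hxφh : ∀ t ∈ Ioc t1 t2, xh t = φh t := by
    intro t ht
    rcases le_or_gt t m with h | h
    · rw [hxh1 t ⟨ht.1.le, h⟩, hφh]; dsimp only
      rw [abs_of_nonpos (by linarith)]; ring
    · rw [hxh2 t ⟨h, ht.2⟩, hφh]; dsimp only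
      rw [abs_of_pos (by linarith), hm]; ring
  have hi_exp : ∀ p q : ℝ, IntervalIntegrable (fun t => Real.exp (-(lam*t))) volume p q :=
    fun p q => Continuous.intervalIntegrable (by continuity) p q
  have hi_expmul : ∀ c p q : ℝ,
      IntervalIntegrable (fun t => Real.exp (-(lam*t)) * (t - c)) volume p q :=
    fun c p q => Continuous.intervalIntegrable (by fun_prop) p q
  have hnege : ∀ p q : ℝ, IntervalIntegrable (fun t => -Real.exp (-(lam*t))) volume p q :=
    fun p q => (hi_exp p q).neg
  have hamul : ∀ c c' p q : ℝ,
      IntervalIntegrable (fun t => c' * (Real.exp (-(lam*t)) * (t - c))) volume p q :=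
    fun c c' p q => (hi_expmul c p q).const_mul c'
  -- the φh integral
  have hA : ∫ t in t1..t2, Real.exp (-(lam*t)) * φh t
      = (-(∫ t in t1..m, Real.exp (-(lam*t))) + a * ∫ t in t1..m, Real.exp (-(lam*t)) * (t - t1))
        + (-(∫ t in m..t2, Real.exp (-(lam*t))) + (-a) * ∫ t in m..t2, Real.exp (-(lam*t)) * (t - t2)) := by
    have hiφ : ∀ p q : ℝ, IntervalIntegrable (fun t => Real.exp (-(lam*t)) * φh t) volume p q :=
      fun p q => Continuous.intervalIntegrable (Continuous.mul (by fun_prop) hφhc) p q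
    rw [← intervalIntegral.integral_add_adjacent_intervals (hiφ t1 m) (hiφ m t2)]
    congr 1
    · have e : ∫ t in t1..m, Real.exp (-(lam*t)) * φh t
          = ∫ t in t1..m, (-Real.exp (-(lam*t)) + a * (Real.exp (-(lam*t)) * (t - t1))) := by
        apply intervalIntegral.integral_congr
        intro t ht
        rw [uIcc_of_le hm1] at ht
        simp only [hφh]
        rw [abs_of_nonpos (by linarith [ht.1, ht.2])]; ring
      rw [e, intervalIntegral.integral_add (hnege t1 m) (hamul t1 a t1 m),
        intervalIntegral.integral_neg, intervalIntegral.integral_const_mul]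
    · have e : ∫ t in m..t2, Real.exp (-(lam*t)) * φh t
          = ∫ t in m..t2, (-Real.exp (-(lam*t)) + (-a) * (Real.exp (-(lam*t)) * (t - t2))) := by
        apply intervalIntegral.integral_congr
        intro t ht
        rw [uIcc_of_le hm2] at ht
        rcases eq_or_lt_of_le ht.1 with h | h
        · simp only [hφh]
          rw [← h, abs_of_nonpos (by linarith), hm]; ring
        · simp only [hφh]
          rw [abs_of_pos (by linarith [h]), hm]; ring
      rw [e, intervalIntegral.integral_add (hnege m t2) (hamul t2 (-a) m t2),
        intervalIntegral.integral_neg, intervalIntegral.integral_const_mul]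
  -- the Gh integral
  have hB : ∫ s in t1..t2, Real.exp (-(lam*s)) * (∫ t in t1..s, uh t)
      = (-(∫ s in t1..m, Real.exp (-(lam*s)) * (s - t1)))
        + ∫ s in m..t2, Real.exp (-(lam*s)) * (s - t2) := by
    have e0 : ∫ s in t1..t2, Real.exp (-(lam*s)) * (∫ t in t1..s, uh t)
        = ∫ s in t1..t2, Real.exp (-(lam*s)) * (|s - m| - (m - t1)) := by
      apply intervalIntegral.integral_congr
      intro s hs
      rw [uIcc_of_le h12'] at hs
      dsimp only; rw [hGh s hs]
    have hiψ : ∀ p q : ℝ, IntervalIntegrable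
        (fun s => Real.exp (-(lam*s)) * (|s - m| - (m - t1))) volume p q :=
      fun p q => Continuous.intervalIntegrable (Continuous.mul (by fun_prop) (((continuous_id.sub continuous_const).abs).sub continuous_const)) p q
    rw [e0, ← intervalIntegral.integral_add_adjacent_intervals (hiψ t1 m) (hiψ m t2)]
    congr 1
    · have e : ∫ s in t1..m, Real.exp (-(lam*s)) * (|s - m| - (m - t1))
          = ∫ s in t1..m, -(Real.exp (-(lam*s)) * (s - t1)) := by
        apply intervalIntegral.integral_congr
        intro s hs
        rw [uIcc_of_le hm1] at hs
        dsimp only; rw [abs_of_nonpos (by linarith [hs.2])]; ring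
      rw [e, intervalIntegral.integral_neg]
    · apply intervalIntegral.integral_congr
      intro s hs
      rw [uIcc_of_le hm2] at hs
      rcases eq_or_lt_of_le hs.1 with h | h
      · dsimp only; rw [← h, abs_of_nonpos (by linarith), hm]; ring
      · dsimp only; rw [abs_of_pos (by linarith), hm]; ring
  have hCh : FP3Cost lam t1 t2 xh uh
      = -(((-(∫ t in t1..m, Real.exp (-(lam*t))) + a * ∫ t in t1..m, Real.exp (-(lam*t)) * (t - t1))
        + (-(∫ t in m..t2, Real.exp (-(lam*t))) + (-a) * ∫ t in m..t2, Real.exp (-(lam*t)) * (t - t2))))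
        - (Real.exp (-(lam*t2)) * (|t2 - m| - (m - t1))
           + lam * ((-(∫ s in t1..m, Real.exp (-(lam*s)) * (s - t1)))
        + ∫ s in m..t2, Real.exp (-(lam*s)) * (s - t2))) := by
    rw [cost_split lam t1 t2 h12' xh uh φh hφhc hxφh huh12, hA, hB,
      hGh t2 ⟨h12', le_rfl⟩]
  -- closed forms
  have ht2m : |t2 - m| = t2 - m := abs_of_nonneg (by linarith)
  have heq : FP3Cost lam t1 t2 xh uh - FP3Cost lam t1 t2 xt ut
      = -((1 / lam) * (a / lam - 1) * FP3Delta lam t1 t2) := by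
    rw [hCh, hCt, ht2m, int_exp lam hlam' t1 m, int_exp lam hlam' m t2,
      int_exp_mul lam hlam' t1 t1 m, int_exp_mul lam hlam' t2 m t2, FP3Delta]
    rw [show -(lam * (t1 + t2) / 2) = -(lam * m) by rw [hm]; ring]
    have h2m : t2 - m = m - t1 := by rw [hm]; ring
    rw [h2m]
    field_simp
    ring
  refine ⟨heq, ?_⟩
  -- positivity of Delta
  have hXY : Real.exp (-(lam*t2)/2) < Real.exp (-(lam*t1)/2) := by
    apply Real.exp_lt_exp.mpr; nlinarith
  have hdelta_pos : 0 < FP3Delta lam t1 t2 := by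
    have e1 : Real.exp (-(lam * t1))
        = Real.exp (-(lam*t1)/2) * Real.exp (-(lam*t1)/2) := by
      rw [← Real.exp_add]; congr 1; ring
    have e2 : Real.exp (-(lam * t2))
        = Real.exp (-(lam*t2)/2) * Real.exp (-(lam*t2)/2) := by
      rw [← Real.exp_add]; congr 1; ring
    have em : Real.exp (-(lam * (t1 + t2) / 2))
        = Real.exp (-(lam*t1)/2) * Real.exp (-(lam*t2)/2) := by
      rw [← Real.exp_add]; congr 1; ring
    rw [FP3Delta, e1, e2, em]
    nlinarith [sq_nonneg (Real.exp (-(lam*t1)/2) - Real.exp (-(lam*t2)/2)), hXY]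
  have hcoef : 0 < (1 / lam) * (a / lam - 1) := by
    apply mul_pos (by positivity)
    have : 1 < a / lam := (one_lt_div hlam).mpr hal
    linarith
  have : 0 < (1 / lam) * (a / lam - 1) * FP3Delta lam t1 t2 := mul_pos hcoef hdelta_pos
  linarith [heq]
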